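/- Let a and b be C¹ vector fields on ℝ^{2n} with b linear, |a(X)| ≤ C|X|, |b(X)| ≤ C|X|, and |a(X) − b(X)| ≤ C'|X|² for all X. Then there exists c̃ > 0 such that for all 0 ≤ t ≤ T and X ∈ ℝ^{2n}, the flows satisfy |φ_a^t(X) − φ_b^t(X)| ≤ c̃ t |X|², where φ_a^t, φ_b^t are the flows of a and b. -/

import Mathlib

open Real Set

/-- Let `a` and `b` be `C¹` vector fields on `ℝ^{2n}` with `b` linear,
`|a(X)| ≤ C|X|`, `|b(X)| ≤ C|X|` and `|a(X) − b(X)| ≤ C'|X|²`.  Then there is `c̃ > 0`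
such that for all `0 ≤ t ≤ T` and all `X`, the flows satisfy
`|φ_a^t(X) − φ_b^t(X)| ≤ c̃ t |X|²`. -/
theorem stmt_7 (n : ℕ) (C C' T : ℝ) (hT : 0 < T)
    (a : EuclideanSpace ℝ (Fin (2 * n)) → EuclideanSpace ℝ (Fin (2 * n)))
    (b : EuclideanSpace ℝ (Fin (2 * n)) →ₗ[ℝ] EuclideanSpace ℝ (Fin (2 * n)))
    (ha : ContDiff ℝ 1 a)
    (haC : ∀ X, ‖a X‖ ≤ C * ‖X‖)
    (hbC : ∀ X, ‖b X‖ ≤ C * ‖X‖)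
    (hab : ∀ X, ‖a X - b X‖ ≤ C' * ‖X‖ ^ 2)
    (φa φb : ℝ → EuclideanSpace ℝ (Fin (2 * n)) → EuclideanSpace ℝ (Fin (2 * n)))
    (hφa0 : ∀ X, φa 0 X = X) (hφb0 : ∀ X, φb 0 X = X)
    (hφa : ∀ t X, HasDerivAt (fun s => φa s X) (a (φa t X)) t)
    (hφb : ∀ t X, HasDerivAt (fun s => φb s X) (b (φb t X)) t) :
    ∃ ctilde > 0, ∀ t, 0 ≤ t → t ≤ T → ∀ X, ‖φa t X - φb t X‖ ≤ ctilde * t * ‖X‖ ^ 2 := by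
  set K : ℝ := max C 0 + 1 with hKdef
  have hK0 : 0 < K := by positivity
  have hCK : C ≤ K := by have := le_max_left C (0:ℝ); linarith
  set K' : ℝ := max C' 0 with hK'def
  have hK'0 : 0 ≤ K' := le_max_right _ _
  have haK : ∀ X, ‖a X‖ ≤ K * ‖X‖ := fun X =>
    (haC X).trans (mul_le_mul_of_nonneg_right hCK (norm_nonneg _))
  have hbK : ∀ X, ‖b X‖ ≤ K * ‖X‖ := fun X =>
    (hbC X).trans (mul_le_mul_of_nonneg_right hCK (norm_nonneg _))
  have habK : ∀ X, ‖a X - b X‖ ≤ K' * ‖X‖ ^ 2 := fun X =>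
    (hab X).trans (mul_le_mul_of_nonneg_right (le_max_left _ _) (by positivity))
  -- Step 1: growth bound for φa
  have hgrow : ∀ X, ∀ t ∈ Icc (0:ℝ) T, ‖φa t X‖ ≤ ‖X‖ * Real.exp (K * T) := by
    intro X t ht
    have h1 : ∀ s ∈ Icc (0:ℝ) T, ‖φa s X‖ ≤ gronwallBound ‖X‖ K 0 (s - 0) := by
      apply norm_le_gronwallBound_of_norm_deriv_right_le
        (f' := fun s => a (φa s X))
      · exact fun s _ => (hφa s X).continuousAt.continuousWithinAt
      · exact fun s _ => (hφa s X).hasDerivWithinAt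
      · simp [hφa0]
      · intro s _; simpa using haK (φa s X)
    have h2 := h1 t ht
    rw [sub_zero, gronwallBound_ε0] at h2
    refine h2.trans (mul_le_mul_of_nonneg_left ?_ (norm_nonneg _))
    exact Real.exp_le_exp.2 (mul_le_mul_of_nonneg_left ht.2 hK0.le)
  refine ⟨K' * Real.exp (3 * (K * T)) + 1, by positivity, ?_⟩
  intro t ht0 htT X
  set ε : ℝ := K' * (‖X‖ * Real.exp (K * T)) ^ 2 with hεdef
  have hε0 : 0 ≤ ε := by positivity
  have h2 : ∀ s ∈ Icc (0:ℝ) T, ‖φa s X - φb s X‖ ≤ gronwallBound 0 K ε (s - 0) := by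
    apply norm_le_gronwallBound_of_norm_deriv_right_le
      (f' := fun s => a (φa s X) - b (φb s X))
    · exact fun s _ => ((hφa s X).sub (hφb s X)).continuousAt.continuousWithinAt
    · exact fun s _ => ((hφa s X).sub (hφb s X)).hasDerivWithinAt
    · simp [hφa0, hφb0]
    · intro s hs
      have key : a (φa s X) - b (φb s X)
          = (a (φa s X) - b (φa s X)) + b (φa s X - φb s X) := by
        rw [map_sub]; abel
      rw [key]
      calc ‖(a (φa s X) - b (φa s X)) + b (φa s X - φb s X)‖
          ≤ ‖a (φa s X) - b (φa s X)‖ + ‖b (φa s X - φb s X)‖ := norm_add_le _ _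
        _ ≤ K' * ‖φa s X‖ ^ 2 + K * ‖φa s X - φb s X‖ :=
            add_le_add (habK _) (hbK _)
        _ ≤ ε + K * ‖φa s X - φb s X‖ := by
            refine add_le_add ?_ le_rfl
            refine mul_le_mul_of_nonneg_left ?_ hK'0
            exact pow_le_pow_left₀ (norm_nonneg _)
              (hgrow X s (Ico_subset_Icc_self hs)) 2
        _ = K * ‖φa s X - φb s X‖ + ε := by ring
  have h3 := h2 t ⟨ht0, htT⟩
  rw [sub_zero, gronwallBound_of_K_ne_0 hK0.ne'] at h3
  simp only [zero_mul, zero_add] at h3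
  -- bound the gronwall bound
  have hexp : Real.exp (K * t) - 1 ≤ K * t * Real.exp (K * t) := by
    have h := Real.add_one_le_exp (-(K * t))
    rw [Real.exp_neg] at h
    have hp := Real.exp_pos (K * t)
    have h1 := mul_le_mul_of_nonneg_right h hp.le
    rw [inv_mul_cancel₀ hp.ne'] at h1
    nlinarith
  have h4 : ε / K * (Real.exp (K * t) - 1) ≤ ε * t * Real.exp (K * T) := by
    have hKt : Real.exp (K * t) ≤ Real.exp (K * T) :=
      Real.exp_le_exp.2 (mul_le_mul_of_nonneg_left htT hK0.le)
    have h5 : ε / K * (Real.exp (K * t) - 1) ≤ ε / K * (K * t * Real.exp (K * t)) :=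
      mul_le_mul_of_nonneg_left hexp (by positivity)
    have h6 : ε / K * (K * t * Real.exp (K * t)) = ε * t * Real.exp (K * t) := by
      field_simp
    rw [h6] at h5
    refine h5.trans ?_
    exact mul_le_mul_of_nonneg_left hKt (by positivity)
  have h7 : ε * t * Real.exp (K * T)
      = K' * Real.exp (3 * (K * T)) * t * ‖X‖ ^ 2 := by
    rw [hεdef]
    rw [show (3 : ℝ) * (K * T) = K * T + (K * T + K * T) by ring,
      Real.exp_add, Real.exp_add]
    ring
  have h8 : ‖φa t X - φb t X‖ ≤ K' * Real.exp (3 * (K * T)) * t * ‖X‖ ^ 2 := by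
    rw [← h7]; exact h3.trans h4
  have h9 : (0:ℝ) ≤ t * ‖X‖ ^ 2 := by positivity
  nlinarith
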